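/- Let φ be the Thue–Morse substitution on the alphabet {a, b} given by φ(a) = ab, φ(b) = ba, extended to words by concatenation. If a word w contains no cube (no nonempty factor of the form uuu), then φ(w) contains no cube. -/

import Mathlib

private def phi (w : List Bool) : List Bool := w.flatMap fun x => [x, !x]

private lemma phi_nil : phi [] = [] := rfl

private lemma phi_cons (x : Bool) (w : List Bool) : phi (x :: w) = x :: (!x) :: phi w := rfl

private lemma phi_append (v w : List Bool) : phi (v ++ w) = phi v ++ phi w := by
  simp [phi, List.flatMap_append]

/-- Adjacent letters at an even position in `phi w` are complementary. -/
private lemma pairB : ∀ (w A : List Bool) (c d : Bool) (B : List Bool),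
    A ++ c :: d :: B = phi w → Even A.length → d = !c := by
  intro w
  induction w with
  | nil => intro A c d B H _; simp [phi_nil] at H
  | cons x w ih =>
    intro A c d B H hev
    rw [phi_cons] at H
    match A with
    | [] =>
      simp only [List.nil_append] at H
      injection H with h1 H
      injection H with h2 _
      rw [h1]; exact h2
    | [a] =>
      simp at hev
    | a :: b :: A' =>
      simp only [List.cons_append] at H
      injection H with _ H
      injection H with _ H
      refine ih A' c d B H ?_
      simp only [List.length_cons] at hev
      rcases hev with ⟨k, hk⟩
      exact ⟨k - 1, by omega⟩

private lemma pairOcc (w A s B : List Bool) (H : A ++ s ++ B = phi w) (j : ℕ)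
    (hj : j + 1 < s.length) (hp : Even (A.length + j)) :
    s.getD (j + 1) false = !(s.getD j false) := by
  have hjlt : j < s.length := by omega
  have hdec : s = s.take j ++ s[j] :: s[j+1] :: s.drop (j + 2) := by
    conv_lhs => rw [← List.take_append_drop j s,
      ← List.getElem_cons_drop hjlt, ← List.getElem_cons_drop hj]
  rw [hdec] at H
  have H2 : (A ++ s.take j) ++ s[j] :: s[j+1] :: (s.drop (j + 2) ++ B) = phi w := by
    rw [← H]; simp only [List.append_assoc, List.cons_append]
  have hlen : (A ++ s.take j).length = A.length + j := by
    simp [List.length_take]; omega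
  have := pairB w (A ++ s.take j) s[j] s[j+1] (s.drop (j+2) ++ B) H2 (by rw [hlen]; exact hp)
  rw [List.getD_eq_getElem s false hj, List.getD_eq_getElem s false hjlt]
  exact this

/-- Even-aligned prefix of `phi w` is an image. -/
private lemma phiP : ∀ (w s B : List Bool), s ++ B = phi w → Even s.length →
    ∃ v C, v ++ C = w ∧ phi v = s := by
  intro w
  induction w with
  | nil =>
    intro s B H _
    simp [phi_nil] at H
    exact ⟨[], [], rfl, by simp [H.1, phi_nil]⟩
  | cons x w ih =>
    intro s B H hev
    rw [phi_cons] at H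
    match s with
    | [] => exact ⟨[], x :: w, rfl, rfl⟩
    | [a] => simp at hev
    | a :: b :: s' =>
      simp only [List.cons_append] at H
      injection H with h1 H
      injection H with h2 H
      obtain ⟨v, C, hvc, hphiv⟩ := ih s' B H (by
        simp only [List.length_cons] at hev
        rcases hev with ⟨k, hk⟩; exact ⟨k - 1, by omega⟩)
      exact ⟨x :: v, C, by simp [← hvc], by rw [phi_cons, hphiv, h1, h2]⟩

/-- Even-aligned even-length factor of `phi w` is an image of a factor. -/
private lemma phiE : ∀ (w A s B : List Bool), A ++ s ++ B = phi w → Even A.length →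
    Even s.length → ∃ v, v <:+: w ∧ phi v = s := by
  intro w
  induction w with
  | nil =>
    intro A s B H _ _
    simp [phi_nil] at H
    exact ⟨[], by simp, by simp [H.2.1, phi_nil]⟩
  | cons x w ih =>
    intro A s B H hA hs
    match A with
    | [] =>
      simp only [List.nil_append] at H
      obtain ⟨v, C, hvc, hphiv⟩ := phiP (x :: w) s B H hs
      exact ⟨v, ⟨[], C, by simp [← hvc]⟩, hphiv⟩
    | [a] => simp at hA
    | a :: b :: A' =>
      rw [phi_cons] at H
      simp only [List.cons_append] at H
      injection H with h1 H
      injection H with h2 H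
      obtain ⟨v, hinf, hphiv⟩ := ih A' s B H (by
        simp only [List.length_cons] at hA
        rcases hA with ⟨k, hk⟩; exact ⟨k - 1, by omega⟩) hs
      exact ⟨v, hinf.trans (List.infix_cons (List.infix_refl w)), hphiv⟩

private lemma phi_inj : ∀ v v' : List Bool, phi v = phi v' → v = v' := by
  intro v
  induction v with
  | nil => intro v' h; cases v' with
    | nil => rfl
    | cons y t => simp [phi_nil, phi_cons] at h
  | cons x t ih =>
    intro v' h
    cases v' with
    | nil => simp [phi_nil, phi_cons] at h
    | cons y t' =>
      rw [phi_cons, phi_cons] at h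
      injection h with h1 h
      injection h with _ h
      rw [h1, ih t' h]

private lemma phiSplit (v s t : List Bool) (h : phi v = s ++ t) (hs : Even s.length) :
    ∃ v₁ v₂, v = v₁ ++ v₂ ∧ phi v₁ = s ∧ phi v₂ = t := by
  obtain ⟨v₁, C, hvc, hphiv⟩ := phiP v s t h.symm hs
  refine ⟨v₁, C, hvc.symm, hphiv, ?_⟩
  have h2 : phi v₁ ++ phi C = s ++ t := by rw [← phi_append, hvc, h]
  rw [hphiv] at h2
  exact List.append_cancel_left h2

/-- The even-aligned, even-length cube case. -/
private lemma cubeEvenEven (w A u B : List Bool) (H : A ++ (u ++ u ++ u) ++ B = phi w)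
    (hA : Even A.length) (hu : Even u.length) (hne : u ≠ []) :
    ∃ v, v ≠ [] ∧ (v ++ v ++ v) <:+: w := by
  obtain ⟨v, hinf, hphiv⟩ := phiE w A (u ++ u ++ u) B H hA (by
    simp only [List.length_append]
    rcases hu with ⟨k, hk⟩; exact ⟨3 * k, by omega⟩)
  obtain ⟨v₁, v₂, rfl, h1, h2⟩ := phiSplit v u (u ++ u) (by rw [hphiv]; simp [List.append_assoc]) hu
  obtain ⟨v₃, v₄, rfl, h3, h4⟩ := phiSplit v₂ u u h2 hu
  have e3 : v₁ = v₃ := phi_inj _ _ (h1.trans h3.symm)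
  have e4 : v₁ = v₄ := phi_inj _ _ (h1.trans h4.symm)
  subst e3; subst e4
  refine ⟨v₁, fun hv => hne ?_, by simpa [List.append_assoc] using hinf⟩
  rw [hv] at h1; rw [← h1, phi_nil]

private lemma getU (u : List Bool) (j : ℕ) (h : j < 3 * u.length) :
    (u ++ u ++ u).getD j false = u.getD (j % u.length) false := by
  set n := u.length with hn
  have hn0 : 0 < n := by omega
  rcases lt_or_ge j n with h1 | h1
  · rw [List.getD_append (u ++ u) u false j (by simp [List.length_append]; omega),
      List.getD_append u u false j (by omega), Nat.mod_eq_of_lt h1]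
  rcases lt_or_ge j (2 * n) with h2 | h2
  · rw [List.getD_append (u ++ u) u false j (by simp [List.length_append]; omega),
      List.getD_append_right u u false j (by omega)]
    have hm : j % n = j - n := by
      conv_lhs => rw [show j = (j - n) + n by omega]
      rw [Nat.add_mod_right]
      exact Nat.mod_eq_of_lt (by omega)
    rw [hm, ← hn]
  · rw [List.getD_append_right (u ++ u) u false j (by simp [List.length_append]; omega)]
    have hl : (u ++ u).length = 2 * n := by simp [List.length_append]; omega
    rw [hl]
    have hm : j % n = j - 2 * n := by
      conv_lhs => rw [show j = (j - 2 * n) + n + n by omega]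
      rw [Nat.add_mod_right, Nat.add_mod_right]
      exact Nat.mod_eq_of_lt (by omega)
    rw [hm]

theorem stmt_11 (w : List Bool)
    (h : ¬ ∃ u : List Bool, u ≠ [] ∧ (u ++ u ++ u) <:+: w) :
    ¬ ∃ u : List Bool, u ≠ [] ∧ (u ++ u ++ u) <:+: (w.flatMap fun x => [x, !x]) := by
  rintro ⟨u, hne, hinf⟩
  obtain ⟨l₁, l₂, heq⟩ := hinf
  have heq : l₁ ++ (u ++ u ++ u) ++ l₂ = phi w := by
    have hd : phi w = w.flatMap fun x => [x, !x] := rfl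
    rw [hd]; exact heq
  have hn0 : 0 < u.length := List.length_pos_iff.mpr hne
  have hU3 : (u ++ u ++ u).length = 3 * u.length := by simp [List.length_append]; omega
  rcases Nat.even_or_odd u.length with hpar | hpar
  · -- even length cube
    rcases Nat.even_or_odd l₁.length with hp | hp
    · exact h (cubeEvenEven w l₁ u l₂ heq hp hpar hne)
    · -- odd position: rotate
      rcases l₁.eq_nil_or_concat' with rfl | ⟨L, c, rfl⟩
      · rcases hp with ⟨k, hk⟩; simp at hk
      rcases u.eq_nil_or_concat' with h' | ⟨s, d, hu⟩
      · exact hne h'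
      have hLev : Even L.length := by
        simp only [List.length_append, List.length_cons, List.length_nil] at hp
        rcases hp with ⟨k, hk⟩; exact ⟨k, by omega⟩
      -- junction: u.getD 0 = !(u.getD (n-1))
      have hj1 : (u ++ u ++ u).getD u.length false
          = !((u ++ u ++ u).getD (u.length - 1) false) := by
        have := pairOcc w (L ++ [c]) (u ++ u ++ u) l₂ heq (u.length - 1)
          (by rw [hU3]; omega)
          (by
            rcases hp with ⟨k, hk⟩
            simp only [List.length_append, List.length_cons, List.length_nil] at hk ⊢
            rcases hpar with ⟨m, hm⟩
            exact ⟨k + m, by omega⟩)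
        rwa [show u.length - 1 + 1 = u.length by omega] at this
      rw [getU u u.length (by omega), getU u (u.length - 1) (by omega), Nat.mod_self,
        Nat.mod_eq_of_lt (by omega)] at hj1
      have hdlast : u.getD (u.length - 1) false = d := by
        rw [hu]
        rw [show (s ++ [d]).length - 1 = s.length by simp]
        rw [List.getD_append_right s [d] false s.length le_rfl]
        simp
      have hhead : u.getD 0 false = !d := by rw [← hdlast]; exact hj1
      -- letter before the cube equals d
      have hc : c = d := by
        have H' : L ++ (c :: (u ++ u ++ u)) ++ l₂ = phi w := by
          rw [← heq]; simp
        have h0 := pairOcc w L (c :: (u ++ u ++ u)) l₂ H' 0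
          (by simp only [List.length_cons, hU3]; omega) (by simpa using hLev)
        rw [List.getD_cons_succ, List.getD_cons_zero, getU u 0 (by omega),
          Nat.zero_mod, hhead] at h0
        cases c <;> cases d <;> simp_all
      -- rotated cube at even position
      have hrot : L ++ ((d :: s) ++ (d :: s) ++ (d :: s)) ++ (d :: l₂) = phi w := by
        rw [← heq, hc, hu]
        simp only [List.append_assoc, List.cons_append, List.singleton_append,
          List.nil_append]
      have hlen' : Even (d :: s).length := by
        have he : (d :: s).length = u.length := by rw [hu]; simp
        rw [he]; exact hpar
      exact h (cubeEvenEven w L (d :: s) (d :: l₂) hrot hLev hlen' (by simp))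
  · -- odd length cube
    set g : ℕ → Bool := fun j => u.getD (j % u.length) false with hg
    have hgper : ∀ j, g (j + u.length) = g j := by
      intro j; simp only [hg, Nat.add_mod_right]
    have hocc : ∀ j, j + 1 < 3 * u.length → Even (l₁.length + j) → g (j + 1) = !(g j) := by
      intro j hj hpj
      have := pairOcc w l₁ (u ++ u ++ u) l₂ heq j (by omega) hpj
      rwa [getU u (j + 1) (by omega), getU u j (by omega)] at this
    have halt : ∀ j, j + 1 < 2 * u.length → g (j + 1) = !(g j) := by
      intro j hj
      rcases Nat.even_or_odd (l₁.length + j) with hpj | hpj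
      · exact hocc j (by omega) hpj
      · have := hocc (j + u.length) (by omega) (by
          rcases hpj with ⟨k, hk⟩
          rcases hpar with ⟨m, hm⟩
          exact ⟨k + m + 1, by omega⟩)
        rwa [show j + u.length + 1 = (j + 1) + u.length by omega, hgper, hgper] at this
    have key : ∀ j, j < 2 * u.length → g j = ((decide (j % 2 = 1)).xor (g 0)) := by
      intro j
      induction j with
      | zero => intro _; simp
      | succ j ih =>
        intro hj
        rw [halt j (by omega), ih (by omega)]
        rcases Nat.even_or_odd j with ⟨k, hk⟩ | ⟨k, hk⟩
        · rw [show j % 2 = 0 by omega, show (j + 1) % 2 = 1 by omega]; simp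
        · rw [show j % 2 = 1 by omega, show (j + 1) % 2 = 0 by omega]; simp
    have h1 : g u.length = !(g 0) := by
      rw [key u.length (by omega)]
      rcases hpar with ⟨m, hm⟩
      rw [show u.length % 2 = 1 by omega]; simp
    have h2 : g u.length = g 0 := by
      have := hgper 0; simpa using this
    rw [h2] at h1
    cases hgo : g 0 <;> rw [hgo] at h1 <;> simp at h1
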